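/- Let X be a connected Hausdorff topological additive commutative group and let C ⊆ X be a convex set with 0 in the interior of C. Then the Minkowski functional ρ_C is finite at every point of X and, regarded as a function X → ℝ, is continuous on all of X. -/

import Mathlib

open scoped ENNReal

/-- A subset `A` of an additive commutative monoid is convex if whenever
`m • x = m₁ • x₁ + ⋯ + mₙ • xₙ` with `xᵢ ∈ A`, positive integers `mᵢ`
and `m = m₁ + ⋯ + mₙ`, then `x ∈ A`. -/
def MConvex {X : Type*} [AddCommMonoid X] (A : Set X) : Prop :=
  ∀ (n : ℕ), 0 < n → ∀ (x : X) (xs : Fin n → X) (ms : Fin n → ℕ),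
    (∀ i, xs i ∈ A) → (∀ i, 0 < ms i) →
    (∑ i, ms i) • x = ∑ i, ms i • xs i → x ∈ A

/-- The rational dilation `(m/l) · C` of a subset `C` of an additive commutative monoid. -/
def ratDil {X : Type*} [AddCommMonoid X] (m l : ℕ) (C : Set X) : Set X :=
  {x : X | ∃ (n : ℕ), 0 < n ∧ ∃ (xs : Fin n → X) (ms : Fin n → ℕ),
    (∀ i, xs i ∈ C) ∧ (∀ i, 0 < ms i) ∧ (∑ i, ms i) = m ∧ l • x = ∑ i, ms i • xs i}

/-- The Minkowski functional of `C`: `ρ_C x = inf { m/l : x ∈ (m/l) · C } ∈ [0,∞]`,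
with value `∞` if no such fraction exists. -/
noncomputable def mink {X : Type*} [AddCommMonoid X] (C : Set X) (x : X) : ℝ≥0∞ :=
  sInf {q : ℝ≥0∞ | ∃ m l : ℕ, 0 < m ∧ 0 < l ∧ x ∈ ratDil m l C ∧ q = (m : ℝ≥0∞) / (l : ℝ≥0∞)}

lemma ratDil_add {X : Type*} [AddCommMonoid X] {C : Set X} {m l m' l' : ℕ}
    (hl : 0 < l) (hl' : 0 < l') {x y : X}
    (hx : x ∈ ratDil m l C) (hy : y ∈ ratDil m' l' C) :
    x + y ∈ ratDil (l' * m + l * m') (l * l') C := by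
  obtain ⟨n, hn, xs, ms, hxs, hms, hsum, heq⟩ := hx
  obtain ⟨n', hn', ys, ms', hys, hms', hsum', heq'⟩ := hy
  refine ⟨n + n', by omega, Fin.append xs ys,
    Fin.append (fun i => l' * ms i) (fun i => l * ms' i), ?_, ?_, ?_, ?_⟩
  · intro i
    refine Fin.addCases (fun j => ?_) (fun j => ?_) i <;>
      simp [Fin.append_left, Fin.append_right, hxs, hys]
  · intro i
    refine Fin.addCases (fun j => ?_) (fun j => ?_) i <;>
      simp [Fin.append_left, Fin.append_right] <;> exact ⟨by omega, by solve_by_elim⟩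
  · rw [Fin.sum_univ_add]
    simp only [Fin.append_left, Fin.append_right]
    rw [← Finset.mul_sum, ← Finset.mul_sum, hsum, hsum']
  · rw [Fin.sum_univ_add]
    simp only [Fin.append_left, Fin.append_right]
    have : (l * l') • (x + y) = l' • (l • x) + l • (l' • y) := by
      rw [smul_add, smul_smul, smul_smul, mul_comm l' l]
    rw [this, heq, heq', Finset.smul_sum, Finset.smul_sum]
    congr 1 <;> exact Finset.sum_congr rfl (fun i _ => by rw [smul_smul])

lemma frac_add {m l m' l' : ℕ} (hl : 0 < l) (hl' : 0 < l') :
    ((l' * m + l * m' : ℕ) : ℝ≥0∞) / ((l * l' : ℕ) : ℝ≥0∞)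
      = (m : ℝ≥0∞) / l + (m' : ℝ≥0∞) / l' := by
  have hl0 : (l : ℝ≥0∞) ≠ 0 := Nat.cast_ne_zero.mpr hl.ne'
  have hl'0 : (l' : ℝ≥0∞) ≠ 0 := Nat.cast_ne_zero.mpr hl'.ne'
  have hlt : (l : ℝ≥0∞) ≠ ⊤ := ENNReal.natCast_ne_top l
  have hl't : (l' : ℝ≥0∞) ≠ ⊤ := ENNReal.natCast_ne_top l'
  push_cast
  rw [← ENNReal.div_add_div_same]
  congr 1
  · rw [mul_comm (l : ℝ≥0∞) l', ENNReal.mul_div_mul_left _ _ hl'0 hl't]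
  · rw [ENNReal.mul_div_mul_left _ _ hl0 hlt]

lemma mink_le {X : Type*} [AddCommMonoid X] {C : Set X} {m l : ℕ} (hm : 0 < m) (hl : 0 < l)
    {x : X} (hx : x ∈ ratDil m l C) : mink C x ≤ (m : ℝ≥0∞) / l :=
  sInf_le ⟨m, l, hm, hl, hx, rfl⟩

lemma mink_le_add_of_sub {X : Type*} [AddCommGroup X] {C : Set X} {l : ℕ} (hl : 0 < l)
    {x y : X} (h : y - x ∈ ratDil 1 l C) : mink C y ≤ mink C x + 1 / (l : ℝ≥0∞) := by
  apply ENNReal.le_of_forall_pos_le_add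
  intro ε hε hlt
  have hxt : mink C x ≠ ⊤ := by
    intro ht; rw [ht] at hlt; simp at hlt
  have hlt' : mink C x < mink C x + ε := by
    exact ENNReal.lt_add_right hxt (by exact_mod_cast hε.ne')
  obtain ⟨q, hq, hqlt⟩ := sInf_lt_iff.mp hlt'
  obtain ⟨m, l₀, hm, hl₀, hx, rfl⟩ := hq
  have hy : y ∈ ratDil (l * m + l₀ * 1) (l₀ * l) C := by
    have := ratDil_add hl₀ hl hx h
    rwa [add_sub_cancel] at this
  have hle : mink C y ≤ ((l * m + l₀ * 1 : ℕ) : ℝ≥0∞) / ((l₀ * l : ℕ) : ℝ≥0∞) :=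
    mink_le (by positivity) (by positivity) hy
  rw [frac_add hl₀ hl] at hle
  simp only [Nat.cast_one] at hle
  calc mink C y ≤ (m : ℝ≥0∞) / l₀ + 1 / l := hle
    _ ≤ (mink C x + ε) + 1 / l := by gcongr
    _ = mink C x + 1 / l + ε := by ring

lemma exists_rep {X : Type*} [AddCommGroup X] [TopologicalSpace X] [IsTopologicalAddGroup X]
    [ConnectedSpace X] {C : Set X} (h0 : (0 : X) ∈ interior C) (x : X) :
    ∃ n : ℕ, 0 < n ∧ x ∈ ratDil n 1 C := by
  set U := interior C with hU
  set S : Set X := {x | ∃ n : ℕ, 0 < n ∧ ∃ xs : Fin n → X, (∀ i, xs i ∈ U) ∧ ∑ i, xs i = x}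
    with hS
  have hstep : ∀ s ∈ S, ∀ v ∈ U, s + v ∈ S := by
    rintro s ⟨n, hn, xs, hxs, rfl⟩ v hv
    exact ⟨n + 1, by omega, Fin.snoc xs v, by
      intro i
      refine Fin.lastCases ?_ (fun j => ?_) i <;> simp [Fin.snoc_last, Fin.snoc_castSucc, hxs, hv],
      by rw [Fin.sum_univ_castSucc]; simp [Fin.snoc_last, Fin.snoc_castSucc]⟩
  have hne : S.Nonempty := ⟨0, 1, one_pos, fun _ => 0, fun _ => h0, by simp⟩
  have hopen : IsOpen S := by
    rw [isOpen_iff_forall_mem_open]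
    intro s hs
    refine ⟨(fun y => y - s) ⁻¹' U, ?_,
      isOpen_interior.preimage (continuous_id.sub continuous_const), by simp [h0]⟩
    intro y hy
    have := hstep s hs (y - s) hy
    rwa [add_sub_cancel] at this
  have hclosed : IsClosed S := by
    rw [← isOpen_compl_iff, isOpen_iff_forall_mem_open]
    intro z hz
    refine ⟨(fun y => z - y) ⁻¹' U, ?_,
      isOpen_interior.preimage (continuous_const.sub continuous_id), by simp [h0]⟩
    intro y hy
    intro hyS
    exact hz (by simpa using hstep y hyS (z - y) hy)
  have huniv : S = Set.univ := IsClopen.eq_univ ⟨hclosed, hopen⟩ hne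
  have hx : x ∈ S := huniv ▸ Set.mem_univ x
  obtain ⟨n, hn, xs, hxs, hsum⟩ := hx
  refine ⟨n, hn, n, hn, xs, fun _ => 1, fun i => interior_subset (hxs i), fun _ => one_pos, by simp, by
    simpa using hsum.symm⟩

lemma mink_ne_top {X : Type*} [AddCommGroup X] [TopologicalSpace X] [IsTopologicalAddGroup X]
    [ConnectedSpace X] {C : Set X} (h0 : (0 : X) ∈ interior C) (x : X) : mink C x ≠ ⊤ := by
  obtain ⟨n, hn, hx⟩ := exists_rep h0 x
  exact ne_top_of_le_ne_top (by simp [ENNReal.div_eq_top]) (mink_le hn one_pos hx)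

theorem mink_finite_continuous'
    {X : Type*} [AddCommGroup X] [TopologicalSpace X] [IsTopologicalAddGroup X]
    [ConnectedSpace X] [T2Space X] {C : Set X} 
    (h0 : (0 : X) ∈ interior C) :
    (∀ x : X, mink C x ≠ ⊤) ∧ Continuous (fun x : X => (mink C x).toReal) := by
  refine ⟨mink_ne_top h0, ?_⟩
  rw [continuous_iff_continuousAt]
  intro x₀
  rw [ContinuousAt, Metric.tendsto_nhds]
  intro ε hε
  obtain ⟨l, hl⟩ := exists_nat_one_div_lt hε
  set l' := l + 1 with hl'
  have hl'pos : 0 < l' := Nat.succ_pos l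
  -- neighborhood
  have hNmem : {y : X | l' • (y - x₀) ∈ interior C ∧ l' • (x₀ - y) ∈ interior C} ∈ nhds x₀ := by
    have hc1 : Continuous fun y : X => l' • (y - x₀) :=
      (continuous_id.sub continuous_const).nsmul l'
    have hc2 : Continuous fun y : X => l' • (x₀ - y) :=
      (continuous_const.sub continuous_id).nsmul l'
    have ho : IsOpen {y : X | l' • (y - x₀) ∈ interior C ∧ l' • (x₀ - y) ∈ interior C} :=
      (isOpen_interior.preimage hc1).inter (isOpen_interior.preimage hc2)
    exact ho.mem_nhds (by simp [h0])
  filter_upwards [hNmem] with y hy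
  obtain ⟨hy1, hy2⟩ := hy
  have hrep : ∀ z : X, l' • z ∈ interior C → z ∈ ratDil 1 l' C := by
    intro z hz
    exact ⟨1, one_pos, fun _ => l' • z, fun _ => 1, fun _ => interior_subset hz,
      fun _ => one_pos, by simp, by simp⟩
  have h1 : mink C y ≤ mink C x₀ + 1 / (l' : ℝ≥0∞) :=
    mink_le_add_of_sub hl'pos (hrep _ hy1)
  have h2 : mink C x₀ ≤ mink C y + 1 / (l' : ℝ≥0∞) := by
    apply mink_le_add_of_sub hl'pos
    exact hrep _ (by simpa using hy2)
  have hyt := mink_ne_top h0 y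
  have hxt := mink_ne_top h0 x₀
  have hdiv : (1 : ℝ≥0∞) / (l' : ℝ≥0∞) ≠ ⊤ := by
    simp [ENNReal.div_eq_top, Nat.cast_ne_zero.mpr hl'pos.ne']
  have hfrac : (1 / (l' : ℝ≥0∞)).toReal = 1 / (l' : ℝ) := by
    simp [ENNReal.toReal_div]
  have hr1 : (mink C y).toReal ≤ (mink C x₀).toReal + 1 / (l' : ℝ) := by
    have := ENNReal.toReal_mono (ENNReal.add_ne_top.mpr ⟨hxt, hdiv⟩) h1
    rwa [ENNReal.toReal_add hxt hdiv, hfrac] at this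
  have hr2 : (mink C x₀).toReal ≤ (mink C y).toReal + 1 / (l' : ℝ) := by
    have := ENNReal.toReal_mono (ENNReal.add_ne_top.mpr ⟨hyt, hdiv⟩) h2
    rwa [ENNReal.toReal_add hyt hdiv, hfrac] at this
  rw [Real.dist_eq, abs_sub_lt_iff]
  have hlt : 1 / (l' : ℝ) < ε := by
    rw [hl']; push_cast; exact hl
  constructor <;> linarith


theorem mink_finite_continuous
    {X : Type*} [AddCommGroup X] [TopologicalSpace X] [IsTopologicalAddGroup X]
    [ConnectedSpace X] [T2Space X] {C : Set X} (hC : MConvex C)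
    (h0 : (0 : X) ∈ interior C) :
    (∀ x : X, mink C x ≠ ⊤) ∧ Continuous (fun x : X => (mink C x).toReal) := by
  exact mink_finite_continuous' h0
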